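/- Let A be a countable set with a reflexive, transitive order ≤, such that every upwards-closed subset of A either has a minimum element or equals A. Let μ₁, μ₂ be sub-distributions over A of equal weight. Then μ₂ stochastically dominates μ₁ (i.e., μ₁({a : k ≤ a}) ≤ μ₂({a : k ≤ a}) for every k ∈ A) if and only if there exists a coupling of (μ₁, μ₂) with support contained in {(a₁,a₂) : a₁ ≤ a₂}. -/

import Mathlib

open scoped ENNReal

noncomputable section

/-- A discrete sub-distribution: total mass at most 1. -/
def IsSubDist {A : Type*} (μ : A → ℝ≥0∞) : Prop := ∑' a, μ a ≤ 1

/-- Mass of a set under `μ`. -/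
def setSum {A : Type*} (μ : A → ℝ≥0∞) (S : Set A) : ℝ≥0∞ := ∑' a : S, μ (a : A)

/-- `μ` is a coupling of `(μ₁, μ₂)`: a joint sub-distribution with the given marginals. -/
def IsCoupling {A₁ A₂ : Type*} (μ : A₁ × A₂ → ℝ≥0∞)
    (μ₁ : A₁ → ℝ≥0∞) (μ₂ : A₂ → ℝ≥0∞) : Prop :=
  IsSubDist μ ∧ (∀ a₁, ∑' a₂, μ (a₁, a₂) = μ₁ a₁) ∧ (∀ a₂, ∑' a₁, μ (a₁, a₂) = μ₂ a₂)

/-- Image of a set under a relation. -/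
def relImage {A₁ A₂ : Type*} (R : Set (A₁ × A₂)) (S : Set A₁) : Set A₂ :=
  {a₂ | ∃ a₁ ∈ S, (a₁, a₂) ∈ R}

/-- `R⋆ = R ∪ (A₁ × {⋆}) ∪ ({⋆} × A₂)`, with `⋆` modelled by `none`. -/
def starRel {A₁ A₂ : Type*} (R : Set (A₁ × A₂)) : Set (Option A₁ × Option A₂) :=
  {p | match p with
       | (some a₁, some a₂) => (a₁, a₂) ∈ R
       | (some _, none) => True
       | (none, some _) => True
       | (none, none) => False}

/-- `(ε, δ)`-approximate `R`-lifting of `(μ₁, μ₂)`, witnessed by two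
sub-distributions over `A₁⋆ × A₂⋆` with marginal, support, and ε-distance conditions. -/
def ApproxLift {A₁ A₂ : Type*} (ε δ : ℝ) (R : Set (A₁ × A₂))
    (μ₁ : A₁ → ℝ≥0∞) (μ₂ : A₂ → ℝ≥0∞) : Prop :=
  ∃ μL μR : Option A₁ × Option A₂ → ℝ≥0∞,
    IsSubDist μL ∧ IsSubDist μR ∧
    (∀ a₁, ∑' o, μL (some a₁, o) = μ₁ a₁) ∧ (∀ o, μL (none, o) = 0) ∧
    (∀ a₂, ∑' o, μR (o, some a₂) = μ₂ a₂) ∧ (∀ o, μR (o, none) = 0) ∧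
    {p | μL p ≠ 0} ⊆ starRel R ∧ {p | μR p ≠ 0} ⊆ starRel R ∧
    ∀ S : Set (Option A₁ × Option A₂),
      setSum μL S ≤ ENNReal.ofReal (Real.exp ε) * setSum μR S + ENNReal.ofReal δ

open Set MeasureTheory

section Helpers

variable {X : Type*}

lemma setSum_def (μ : X → ℝ≥0∞) (S : Set X) : setSum μ S = ∑' x, S.indicator μ x :=
  tsum_subtype S μ

lemma setSum_mono (μ : X → ℝ≥0∞) {S T : Set X} (h : S ⊆ T) : setSum μ S ≤ setSum μ T := by
  rw [setSum_def, setSum_def]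
  exact ENNReal.tsum_le_tsum fun x =>
    Set.indicator_le_indicator_of_subset h (fun _ => zero_le) x

lemma setSum_le_tsum (μ : X → ℝ≥0∞) (S : Set X) : setSum μ S ≤ ∑' x, μ x := by
  rw [setSum_def]
  exact ENNReal.tsum_le_tsum fun x => Set.indicator_le_self S μ x

lemma setSum_univ (μ : X → ℝ≥0∞) : setSum μ Set.univ = ∑' x, μ x := tsum_univ μ

lemma setSum_empty (μ : X → ℝ≥0∞) : setSum μ (∅ : Set X) = 0 := by
  rw [setSum_def]; simp

lemma setSum_union (μ : X → ℝ≥0∞) {S T : Set X} (h : Disjoint S T) :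
    setSum μ (S ∪ T) = setSum μ S + setSum μ T := by
  rw [setSum_def, setSum_def, setSum_def, ← ENNReal.tsum_add]
  exact tsum_congr fun x => by rw [Set.indicator_union_of_disjoint h]

lemma setSum_singleton (μ : X → ℝ≥0∞) (x : X) : setSum μ ({x} : Set X) = μ x := by
  rw [setSum_def]
  rw [tsum_eq_single x]
  · simp
  · intro y hy
    simp [Set.indicator_apply, hy]

lemma setSum_insert (μ : X → ℝ≥0∞) {x : X} {S : Set X} (h : x ∉ S) :
    setSum μ (insert x S) = μ x + setSum μ S := by
  rw [Set.insert_eq, setSum_union μ (Set.disjoint_singleton_left.mpr h), setSum_singleton]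

lemma setSum_indicator (μ : X → ℝ≥0∞) (C V : Set X) :
    setSum (C.indicator μ) V = setSum μ (V ∩ C) := by
  rw [setSum_def, setSum_def]
  exact tsum_congr fun x => by rw [Set.indicator_indicator]

lemma tsum_option' (f : Option X → ℝ≥0∞) :
    ∑' o, f o = f none + ∑' x, f (some x) := by
  have key : ∀ o, f o = ({none} : Set (Option X)).indicator f o
      + ({none}ᶜ : Set (Option X)).indicator f o := by
    intro o
    rw [Set.indicator_self_add_compl_apply]
  rw [tsum_congr key, ENNReal.tsum_add]
  congr 1
  · rw [tsum_eq_single none]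
    · simp
    · intro o ho; simp [Set.indicator_apply, ho]
  · have hsupp : Function.support (({none}ᶜ : Set (Option X)).indicator f)
        ⊆ Set.range (Option.some : X → Option X) := by
      intro o ho
      rcases o with _ | x
      · simp [Set.indicator_apply] at ho
      · exact Set.mem_range_self x
    rw [← Function.Injective.tsum_eq (Option.some_injective X) hsupp]
    exact tsum_congr fun x => by simp [Set.indicator_apply]

lemma setSum_option (f : Option X → ℝ≥0∞) {V : Set (Option X)} (h : none ∉ V) :
    setSum f V = setSum (fun x => f (some x)) {x | some x ∈ V} := by
  rw [setSum_def, setSum_def, tsum_option']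
  have h0 : V.indicator f none = 0 := Set.indicator_of_notMem h f
  rw [h0, zero_add]
  exact tsum_congr fun x => by
    by_cases hx : some x ∈ V <;> simp [Set.indicator_apply, hx]

end Helpers

section Slice

lemma sliceSum {ι : Type*} [Countable ι] {T : Set ℝ} (hT : MeasurableSet T)
    (hTfin : volume T ≠ ∞) (J : ι → Set ℝ) (hmeas : ∀ i, MeasurableSet (J i))
    (hdisj : Pairwise (Function.onFun Disjoint J)) (hsub : ∀ i, J i ⊆ T)
    (hfull : ∑' i, volume (J i) = volume T) {I : Set ℝ} (hI : MeasurableSet I)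
    (hIsub : I ⊆ T) : ∑' i, volume (I ∩ J i) = volume I := by
  have hU : MeasurableSet (⋃ i, J i) := MeasurableSet.iUnion hmeas
  have hUvol : volume (⋃ i, J i) = volume T := by
    rw [measure_iUnion hdisj hmeas]; exact hfull
  have hdiff : volume (T \ ⋃ i, J i) = 0 := by
    rw [measure_diff (Set.iUnion_subset hsub) hU.nullMeasurableSet
      (by rw [hUvol]; exact hTfin), hUvol, tsub_self]
  have h1 : ∑' i, volume (I ∩ J i) = volume (I ∩ ⋃ i, J i) := by
    rw [Set.inter_iUnion, measure_iUnion ?_ (fun i => hI.inter (hmeas i))]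
    intro i j hij
    exact Set.disjoint_of_subset Set.inter_subset_right Set.inter_subset_right (hdisj hij)
  rw [h1]
  have hsub2 : I \ ⋃ i, J i ⊆ T \ ⋃ i, J i := fun x hx => ⟨hIsub hx.1, hx.2⟩
  have h2 : volume (I \ ⋃ i, J i) = 0 := measure_mono_null hsub2 hdiff
  have h3 := measure_inter_add_diff (μ := volume) I hU
  rw [h2, add_zero] at h3
  exact h3

end Slice

section Chain

variable {B : Type*}

def chainUp (S : B → B → Prop) (x : B) : Set B := {z | S x z}

def chainIv (S : B → B → Prop) (ν : B → ℝ≥0∞) (x : B) : Set ℝ :=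
  Set.Ioc ((setSum ν (chainUp S x)).toReal)
    ((setSum ν (chainUp S x)).toReal + (ν x).toReal)

lemma chainIv_facts (S : B → B → Prop) (hSirr : ∀ x, ¬ S x x)
    (hStrans : ∀ {x y z}, S x y → S y z → S x z)
    (hStri : ∀ x y, x ≠ y → S x y ∨ S y x)
    (ν : B → ℝ≥0∞) (hfin : ∑' x, ν x ≠ ∞) :
    (∀ x, chainIv S ν x ⊆ Set.Ioc 0 (∑' x, ν x).toReal) ∧
    (Pairwise (Function.onFun Disjoint (chainIv S ν))) ∧
    (∀ x, volume (chainIv S ν x) = ν x) := by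
  have hνfin : ∀ x, ν x ≠ ∞ := fun x => ne_top_of_le_ne_top hfin (ENNReal.le_tsum x)
  have hupfin : ∀ (T : Set B), setSum ν T ≠ ∞ :=
    fun T => ne_top_of_le_ne_top hfin (setSum_le_tsum ν T)
  have hins : ∀ x, setSum ν (insert x (chainUp S x)) =
      ν x + setSum ν (chainUp S x) := fun x => setSum_insert ν (hSirr x)
  have hub : ∀ x, (setSum ν (chainUp S x)).toReal + (ν x).toReal ≤ (∑' z, ν z).toReal := by
    intro x
    have h1 : ν x + setSum ν (chainUp S x) ≤ ∑' z, ν z := by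
      rw [← hins x]; exact setSum_le_tsum ν _
    have h2 := ENNReal.toReal_mono hfin h1
    rw [ENNReal.toReal_add (hνfin x) (hupfin _)] at h2
    linarith
  have hkey : ∀ {x y}, S x y →
      (setSum ν (chainUp S y)).toReal + (ν y).toReal ≤ (setSum ν (chainUp S x)).toReal := by
    intro x y hxy
    have hsub : insert y (chainUp S y) ⊆ chainUp S x := by
      intro z hz
      rcases hz with rfl | hz
      · exact hxy
      · exact hStrans hxy hz
    have h1 : ν y + setSum ν (chainUp S y) ≤ setSum ν (chainUp S x) := by
      rw [← hins y]; exact setSum_mono ν hsub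
    have h2 := ENNReal.toReal_mono (hupfin _) h1
    rw [ENNReal.toReal_add (hνfin y) (hupfin _)] at h2
    linarith
  refine ⟨?_, ?_, ?_⟩
  · intro x t ht
    constructor
    · exact lt_of_le_of_lt (ENNReal.toReal_nonneg) ht.1
    · exact le_trans ht.2 (hub x)
  · intro x y hxy
    rcases hStri x y hxy with h | h
    · have := hkey h
      have hgoal : Disjoint (chainIv S ν x) (chainIv S ν y) := by
        rw [chainIv, chainIv, Set.Ioc_disjoint_Ioc]
        exact le_trans (min_le_right _ _) (le_trans this (le_max_left _ _))
      exact hgoal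
    · have := hkey h
      have hgoal : Disjoint (chainIv S ν x) (chainIv S ν y) := by
        rw [chainIv, chainIv, Set.Ioc_disjoint_Ioc]
        exact le_trans (min_le_left _ _) (le_trans this (le_max_right _ _))
      exact hgoal
  · intro x
    rw [chainIv, Real.volume_Ioc, add_sub_cancel_left, ENNReal.ofReal_toReal (hνfin x)]

lemma chainCoupling {B : Type*} [Countable B] (r : B → B → Prop)
    (hrefl : ∀ x, r x x) (htrans : ∀ {x y z}, r x y → r y z → r x z)
    (htot : ∀ x y, r x y ∨ r y x)
    (μ₁ μ₂ : B → ℝ≥0∞) (hfin : ∑' x, μ₁ x ≠ ∞)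
    (hw : ∑' x, μ₁ x = ∑' x, μ₂ x)
    (hdom : ∀ V : Set B, (∀ ⦃x y⦄, x ∈ V → r x y → y ∈ V) →
      setSum μ₁ V ≤ setSum μ₂ V) :
    ∃ μ : B × B → ℝ≥0∞, (∀ x, ∑' y, μ (x, y) = μ₁ x) ∧
      (∀ y, ∑' x, μ (x, y) = μ₂ y) ∧ ∀ x y, μ (x, y) ≠ 0 → r x y := by
  obtain ⟨e, he⟩ := (countable_iff_exists_injective B).mp ‹_›
  set S : B → B → Prop := fun x y => (r x y ∧ ¬ r y x) ∨ (r x y ∧ r y x ∧ e x < e y)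
    with hSdef
  have hSirr : ∀ x, ¬ S x x := by
    intro x hx
    rcases hx with ⟨h1, h2⟩ | ⟨_, _, h3⟩
    · exact h2 h1
    · exact lt_irrefl _ h3
  have hSr : ∀ {x y}, S x y → r x y := by
    rintro x y (⟨h, _⟩ | ⟨h, _, _⟩) <;> exact h
  have hStrans : ∀ {x y z}, S x y → S y z → S x z := by
    rintro x y z (⟨h1, h2⟩ | ⟨h1, h2, h3⟩) (⟨g1, g2⟩ | ⟨g1, g2, g3⟩)
    · exact Or.inl ⟨htrans h1 g1, fun hzx => h2 (htrans g1 hzx)⟩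
    · exact Or.inl ⟨htrans h1 g1, fun hzx => h2 (htrans g1 hzx)⟩
    · exact Or.inl ⟨htrans h1 g1, fun hzx => g2 (htrans hzx h1)⟩
    · exact Or.inr ⟨htrans h1 g1, htrans g2 h2, lt_trans h3 g3⟩
  have hStri : ∀ x y, x ≠ y → S x y ∨ S y x := by
    intro x y hxy
    by_cases hxy1 : r x y <;> by_cases hyx1 : r y x
    · rcases lt_or_gt_of_ne (fun h => hxy (he h)) with h | h
      · exact Or.inl (Or.inr ⟨hxy1, hyx1, h⟩)
      · exact Or.inr (Or.inr ⟨hyx1, hxy1, h⟩)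
    · exact Or.inl (Or.inl ⟨hxy1, hyx1⟩)
    · exact Or.inr (Or.inl ⟨hyx1, hxy1⟩)
    · rcases htot x y with h | h
      · exact absurd h hxy1
      · exact absurd h hyx1
  have hfin2 : ∑' x, μ₂ x ≠ ∞ := hw ▸ hfin
  obtain ⟨hsub1, hdisj1, hvol1⟩ := chainIv_facts S hSirr hStrans hStri μ₁ hfin
  obtain ⟨hsub2, hdisj2, hvol2⟩ := chainIv_facts S hSirr hStrans hStri μ₂ hfin2
  set Wr : ℝ := (∑' x, μ₁ x).toReal with hWr
  have hWr2 : (∑' x, μ₂ x).toReal = Wr := by rw [hWr, hw]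
  rw [hWr2] at hsub2
  have hT : MeasurableSet (Set.Ioc (0:ℝ) Wr) := measurableSet_Ioc
  have hTvol : volume (Set.Ioc (0:ℝ) Wr) = ∑' x, μ₁ x := by
    rw [Real.volume_Ioc, sub_zero, hWr, ENNReal.ofReal_toReal hfin]
  have hTfin : volume (Set.Ioc (0:ℝ) Wr) ≠ ∞ := by rw [hTvol]; exact hfin
  have hmeas1 : ∀ x, MeasurableSet (chainIv S μ₁ x) := fun x => measurableSet_Ioc
  have hmeas2 : ∀ x, MeasurableSet (chainIv S μ₂ x) := fun x => measurableSet_Ioc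
  have hfull1 : ∑' x, volume (chainIv S μ₁ x) = volume (Set.Ioc (0:ℝ) Wr) := by
    rw [hTvol]; exact tsum_congr hvol1
  have hfull2 : ∑' x, volume (chainIv S μ₂ x) = volume (Set.Ioc (0:ℝ) Wr) := by
    rw [hTvol, hw]; exact tsum_congr hvol2
  refine ⟨fun p => volume (chainIv S μ₁ p.1 ∩ chainIv S μ₂ p.2), ?_, ?_, ?_⟩
  · intro x
    show ∑' y, volume (chainIv S μ₁ x ∩ chainIv S μ₂ y) = μ₁ x
    rw [sliceSum hT hTfin (chainIv S μ₂) hmeas2 hdisj2 hsub2 hfull2 (hmeas1 x) (hsub1 x)]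
    exact hvol1 x
  · intro y
    have h := sliceSum hT hTfin (chainIv S μ₁) hmeas1 hdisj1 hsub1 hfull1 (hmeas2 y) (hsub2 y)
    show ∑' x, volume (chainIv S μ₁ x ∩ chainIv S μ₂ y) = μ₂ y
    rw [← hvol2 y, ← h]
    exact tsum_congr fun x => by rw [Set.inter_comm]
  · intro x y hne
    by_contra hrxy
    have hryx : r y x := (htot x y).resolve_left hrxy
    set V : Set B := {z | r y z ∧ ¬ r z y} with hV
    have hVup : ∀ ⦃u v⦄, u ∈ V → r u v → v ∈ V := by
      intro u v hu huv
      exact ⟨htrans hu.1 huv, fun hvy => hu.2 (htrans huv hvy)⟩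
    have hsubV : insert x (chainUp S x) ⊆ V := by
      intro z hz
      rcases hz with rfl | hz
      · exact ⟨hryx, hrxy⟩
      · exact ⟨htrans hryx (hSr hz), fun hzy => hrxy (htrans (hSr hz) hzy)⟩
    have hVsub : V ⊆ chainUp S y := fun z hz => Or.inl ⟨hz.1, hz.2⟩
    have hchain : μ₁ x + setSum μ₁ (chainUp S x) ≤ setSum μ₂ (chainUp S y) := by
      calc μ₁ x + setSum μ₁ (chainUp S x) = setSum μ₁ (insert x (chainUp S x)) :=
            (setSum_insert μ₁ (hSirr x)).symm
        _ ≤ setSum μ₁ V := setSum_mono μ₁ hsubV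
        _ ≤ setSum μ₂ V := hdom V hVup
        _ ≤ setSum μ₂ (chainUp S y) := setSum_mono μ₂ hVsub
    have hfinV : setSum μ₂ (chainUp S y) ≠ ∞ :=
      ne_top_of_le_ne_top hfin2 (setSum_le_tsum μ₂ _)
    have hreal := ENNReal.toReal_mono hfinV hchain
    rw [ENNReal.toReal_add (ne_top_of_le_ne_top hfin (ENNReal.le_tsum x))
      (ne_top_of_le_ne_top hfin (setSum_le_tsum μ₁ _))] at hreal
    have hempty : chainIv S μ₁ x ∩ chainIv S μ₂ y = ∅ := by
      ext t
      simp only [chainIv, Set.mem_inter_iff, Set.mem_Ioc, Set.mem_empty_iff_false, iff_false]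
      rintro ⟨⟨h1, h2⟩, ⟨h3, h4⟩⟩
      linarith
    have hzero : volume (chainIv S μ₁ x ∩ chainIv S μ₂ y) = 0 := by
      rw [hempty]; simp
    exact hne hzero

end Chain

section Prod

lemma prodCoupling {X : Type*} (η₁ η₂ : X → ℝ≥0∞) {M : ℝ≥0∞}
    (h₁ : ∑' x, η₁ x = M) (h₂ : ∑' x, η₂ x = M) (hfin : M ≠ ∞) :
    (∀ x, ∑' y, η₁ x * η₂ y * M⁻¹ = η₁ x) ∧
    (∀ y, ∑' x, η₁ x * η₂ y * M⁻¹ = η₂ y) := by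
  by_cases hM : M = 0
  · have hz1 : ∀ x, η₁ x = 0 := by
      intro x
      have := ENNReal.le_tsum (f := η₁) x
      rw [h₁, hM] at this
      exact le_antisymm this zero_le
    have hz2 : ∀ y, η₂ y = 0 := by
      intro y
      have := ENNReal.le_tsum (f := η₂) y
      rw [h₂, hM] at this
      exact le_antisymm this zero_le
    constructor
    · intro x
      rw [hz1 x]
      simp
    · intro y
      rw [hz2 y]
      simp
  · have hcancel : M * M⁻¹ = 1 := ENNReal.mul_inv_cancel hM hfin
    constructor
    · intro x
      calc ∑' y, η₁ x * η₂ y * M⁻¹ = ∑' y, η₂ y * (η₁ x * M⁻¹) :=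
            tsum_congr fun y => by ring
        _ = M * (η₁ x * M⁻¹) := by rw [ENNReal.tsum_mul_right, h₂]
        _ = η₁ x * (M * M⁻¹) := by ring
        _ = η₁ x := by rw [hcancel, mul_one]
    · intro y
      calc ∑' x, η₁ x * η₂ y * M⁻¹ = ∑' x, η₁ x * (η₂ y * M⁻¹) :=
            tsum_congr fun x => by ring
        _ = M * (η₂ y * M⁻¹) := by rw [ENNReal.tsum_mul_right, h₁]
        _ = η₂ y * (M * M⁻¹) := by ring
        _ = η₂ y := by rw [hcancel, mul_one]

lemma setSum_congr' {X : Type*} {f g : X → ℝ≥0∞} (S : Set X) (h : ∀ x, f x = g x) :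
    setSum f S = setSum g S :=
  tsum_congr fun x => h x

end Prod

theorem stochastic_domination_iff' {A : Type*} [Countable A] [Preorder A]
    (hmin : ∀ S : Set A, S.Nonempty → (∀ a b, a ∈ S → a ≤ b → b ∈ S) →
      (∃ m ∈ S, ∀ a ∈ S, m ≤ a) ∨ S = Set.univ)
    (μ₁ μ₂ : A → ℝ≥0∞) (h₁ : IsSubDist μ₁) (h₂ : IsSubDist μ₂)
    (hw : ∑' a, μ₁ a = ∑' a, μ₂ a) :
    (∀ k : A, setSum μ₁ {a | k ≤ a} ≤ setSum μ₂ {a | k ≤ a}) ↔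
      ∃ μ : A × A → ℝ≥0∞, (∀ a₁, ∑' a₂, μ (a₁, a₂) = μ₁ a₁) ∧
        (∀ a₂, ∑' a₁, μ (a₁, a₂) = μ₂ a₂) ∧
        ∀ x y : A, μ (x, y) ≠ 0 → x ≤ y := by
  classical
  have hfin1 : ∑' a, μ₁ a ≠ ∞ := ne_top_of_le_ne_top ENNReal.one_ne_top h₁
  have hfin2 : ∑' a, μ₂ a ≠ ∞ := hw ▸ hfin1
  constructor
  · intro hdom
    by_cases htot : ∀ x y : A, x ≤ y ∨ y ≤ x
    · have hdomV : ∀ V : Set A, (∀ ⦃x y : A⦄, x ∈ V → x ≤ y → y ∈ V) →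
          setSum μ₁ V ≤ setSum μ₂ V := by
        intro V hup
        by_cases hne : V.Nonempty
        · rcases hmin V hne (fun a b ha hab => hup ha hab) with ⟨m, hm, hmle⟩ | huniv
          · have hVeq : V = {a | m ≤ a} := by
              ext z
              exact ⟨fun hz => hmle z hz, fun hz => hup hm hz⟩
            rw [hVeq]
            exact hdom m
          · rw [huniv, setSum_univ, setSum_univ, hw]
        · rw [Set.not_nonempty_iff_eq_empty.mp hne, setSum_empty, setSum_empty]
      obtain ⟨μ, hm1, hm2, hsupp⟩ := chainCoupling (· ≤ ·) le_refl
        (fun h h' => le_trans h h') htot μ₁ μ₂ hfin1 hw hdomV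
      exact ⟨μ, hm1, hm2, hsupp⟩
    ·
      push_neg at htot
      obtain ⟨a₀, b₀, hab, hba⟩ := htot
      have pairUniv : ∀ u v : A, ¬ u ≤ v → ¬ v ≤ u → ∀ z : A, u ≤ z ∨ v ≤ z := by
        intro u v huv hvu z
        by_contra hz
        push_neg at hz
        have hup : ∀ a b : A, a ∈ {x | u ≤ x} ∪ {x | v ≤ x} → a ≤ b →
            b ∈ {x | u ≤ x} ∪ {x | v ≤ x} := by
          rintro a b (ha | ha) hab2
          · exact Or.inl (le_trans ha hab2)
          · exact Or.inr (le_trans ha hab2)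
        rcases hmin _ ⟨u, Or.inl (le_refl u)⟩ hup with ⟨m, hm, hmle⟩ | huniv
        · have hmu : m ≤ u := hmle u (Or.inl (le_refl u))
          have hmv : m ≤ v := hmle v (Or.inr (le_refl v))
          rcases hm with h | h
          · exact huv (le_trans h hmv)
          · exact hvu (le_trans h hmu)
        · have hz2 : z ∈ {x | u ≤ x} ∪ {x | v ≤ x} := huniv ▸ Set.mem_univ z
          rcases hz2 with h | h
          · exact hz.1 h
          · exact hz.2 h
      have S1 : ∀ z : A, a₀ ≤ z ∨ b₀ ≤ z := pairUniv a₀ b₀ hab hba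
      have S2a : ∀ x : A, a₀ ≤ x → ¬ b₀ ≤ x → x ≤ a₀ := by
        intro x hax hbx
        have hxb : ¬ x ≤ b₀ := fun h => hab (le_trans hax h)
        rcases pairUniv x b₀ hxb hbx a₀ with h | h
        · exact h
        · exact absurd h hba
      have S2b : ∀ x : A, b₀ ≤ x → ¬ a₀ ≤ x → x ≤ b₀ := by
        intro x hbx hax
        have hxa : ¬ x ≤ a₀ := fun h => hba (le_trans hbx h)
        rcases pairUniv x a₀ hxa hax b₀ with h | h
        · exact h
        · exact absurd h hab
      set CA : Set A := {x | a₀ ≤ x ∧ ¬ b₀ ≤ x} with hCAdef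
      set CB : Set A := {x | b₀ ≤ x ∧ ¬ a₀ ≤ x} with hCBdef
      set CC : Set A := {x | a₀ ≤ x ∧ b₀ ≤ x} with hCCdef
      have hdAB : Disjoint CA CB := Set.disjoint_left.mpr fun _ h h' => h'.2 h.1
      have hdAC : Disjoint CA CC := Set.disjoint_left.mpr fun _ h h' => h.2 h'.2
      have hdBC : Disjoint CB CC := Set.disjoint_left.mpr fun _ h h' => h.2 h'.1
      have hcover : ∀ x, x ∈ CA ∨ x ∈ CB ∨ x ∈ CC := by
        intro x
        rcases S1 x with h | h
        · by_cases h2 : b₀ ≤ x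
          · exact Or.inr (Or.inr ⟨h, h2⟩)
          · exact Or.inl ⟨h, h2⟩
        · by_cases h2 : a₀ ≤ x
          · exact Or.inr (Or.inr ⟨h2, h⟩)
          · exact Or.inr (Or.inl ⟨h, h2⟩)
      have huniv3 : (Set.univ : Set A) = CA ∪ (CB ∪ CC) := by
        apply Set.eq_of_subset_of_subset
        · intro x _
          rcases hcover x with h | h | h
          · exact Or.inl h
          · exact Or.inr (Or.inl h)
          · exact Or.inr (Or.inr h)
        · exact fun x _ => Set.mem_univ x
      have hsplit : ∀ ν : A → ℝ≥0∞,
          ∑' x, ν x = setSum ν CA + (setSum ν CB + setSum ν CC) := by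
        intro ν
        rw [← setSum_univ, huniv3,
          setSum_union ν (Set.disjoint_union_right.mpr ⟨hdAB, hdAC⟩),
          setSum_union ν hdBC]
      have hupb : {x : A | b₀ ≤ x} = CB ∪ CC := by
        apply Set.eq_of_subset_of_subset
        · intro x hx
          by_cases h2 : a₀ ≤ x
          · exact Or.inr ⟨h2, hx⟩
          · exact Or.inl ⟨hx, h2⟩
        · rintro x (h | h)
          · exact h.1
          · exact h.2
      have hupa : {x : A | a₀ ≤ x} = CA ∪ CC := by
        apply Set.eq_of_subset_of_subset
        · intro x hx
          by_cases h2 : b₀ ≤ x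
          · exact Or.inr ⟨hx, h2⟩
          · exact Or.inl ⟨hx, h2⟩
        · rintro x (h | h)
          · exact h.1
          · exact h.1
      have hSSfin1 : ∀ T : Set A, setSum μ₁ T ≠ ∞ :=
        fun T => ne_top_of_le_ne_top hfin1 (setSum_le_tsum μ₁ T)
      have hSSfin2 : ∀ T : Set A, setSum μ₂ T ≠ ∞ :=
        fun T => ne_top_of_le_ne_top hfin2 (setSum_le_tsum μ₂ T)
      have e1 : setSum μ₁ CA + (setSum μ₁ CB + setSum μ₁ CC)
          = setSum μ₂ CA + (setSum μ₂ CB + setSum μ₂ CC) := by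
        rw [← hsplit μ₁, ← hsplit μ₂, hw]
      have hdomb : setSum μ₁ CB + setSum μ₁ CC ≤ setSum μ₂ CB + setSum μ₂ CC := by
        have h := hdom b₀
        rwa [hupb, setSum_union μ₁ hdBC, setSum_union μ₂ hdBC] at h
      have hdoma : setSum μ₁ CA + setSum μ₁ CC ≤ setSum μ₂ CA + setSum μ₂ CC := by
        have h := hdom a₀
        rwa [hupa, setSum_union μ₁ hdAC, setSum_union μ₂ hdAC] at h
      have hpA : setSum μ₂ CA ≤ setSum μ₁ CA := by
        have h : setSum μ₂ CA + (setSum μ₂ CB + setSum μ₂ CC)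
            ≤ setSum μ₁ CA + (setSum μ₂ CB + setSum μ₂ CC) := by
          calc setSum μ₂ CA + (setSum μ₂ CB + setSum μ₂ CC)
              = setSum μ₁ CA + (setSum μ₁ CB + setSum μ₁ CC) := e1.symm
            _ ≤ setSum μ₁ CA + (setSum μ₂ CB + setSum μ₂ CC) := add_le_add le_rfl hdomb
        exact (ENNReal.add_le_add_iff_right
          (ENNReal.add_ne_top.mpr ⟨hSSfin2 CB, hSSfin2 CC⟩)).mp h
      have hpB : setSum μ₂ CB ≤ setSum μ₁ CB := by
        have h : setSum μ₂ CB + (setSum μ₂ CA + setSum μ₂ CC)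
            ≤ setSum μ₁ CB + (setSum μ₂ CA + setSum μ₂ CC) := by
          calc setSum μ₂ CB + (setSum μ₂ CA + setSum μ₂ CC)
              = setSum μ₂ CA + (setSum μ₂ CB + setSum μ₂ CC) := by ring
            _ = setSum μ₁ CA + (setSum μ₁ CB + setSum μ₁ CC) := e1.symm
            _ = setSum μ₁ CB + (setSum μ₁ CA + setSum μ₁ CC) := by ring
            _ ≤ setSum μ₁ CB + (setSum μ₂ CA + setSum μ₂ CC) := add_le_add le_rfl hdoma
        exact (ENNReal.add_le_add_iff_right
          (ENNReal.add_ne_top.mpr ⟨hSSfin2 CA, hSSfin2 CC⟩)).mp h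
      have hM12 : setSum μ₁ CC ≤ setSum μ₂ CC := by
        have h : setSum μ₂ CA + (setSum μ₂ CB + setSum μ₁ CC)
            ≤ setSum μ₂ CA + (setSum μ₂ CB + setSum μ₂ CC) := by
          calc setSum μ₂ CA + (setSum μ₂ CB + setSum μ₁ CC)
              ≤ setSum μ₁ CA + (setSum μ₁ CB + setSum μ₁ CC) :=
                add_le_add hpA (add_le_add hpB le_rfl)
            _ = setSum μ₂ CA + (setSum μ₂ CB + setSum μ₂ CC) := e1
        exact (ENNReal.add_le_add_iff_left (hSSfin2 CB)).mp
          ((ENNReal.add_le_add_iff_left (hSSfin2 CA)).mp h)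
      set rA : ℝ≥0∞ := setSum μ₁ CA - setSum μ₂ CA with hrAdef
      set rB : ℝ≥0∞ := setSum μ₁ CB - setSum μ₂ CB with hrBdef
      have h1A : setSum μ₂ CA + rA = setSum μ₁ CA := add_tsub_cancel_of_le hpA
      have h1B : setSum μ₂ CB + rB = setSum μ₁ CB := add_tsub_cancel_of_le hpB
      have hrAfin : rA ≠ ∞ := ne_top_of_le_ne_top (hSSfin1 CA) tsub_le_self
      have hrBfin : rB ≠ ∞ := ne_top_of_le_ne_top (hSSfin1 CB) tsub_le_self
      set d : ℝ≥0∞ := rA + rB with hddef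
      have hdfin : d ≠ ∞ := ENNReal.add_ne_top.mpr ⟨hrAfin, hrBfin⟩
      have hd_eq : d + setSum μ₁ CC = setSum μ₂ CC := by
        have h : setSum μ₂ CA + (setSum μ₂ CB + (d + setSum μ₁ CC))
            = setSum μ₂ CA + (setSum μ₂ CB + setSum μ₂ CC) := by
          calc setSum μ₂ CA + (setSum μ₂ CB + (d + setSum μ₁ CC))
              = (setSum μ₂ CA + rA) + ((setSum μ₂ CB + rB) + setSum μ₁ CC) := by
                rw [hddef]; ring
            _ = setSum μ₁ CA + (setSum μ₁ CB + setSum μ₁ CC) := by rw [h1A, h1B]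
            _ = setSum μ₂ CA + (setSum μ₂ CB + setSum μ₂ CC) := e1
        exact (ENNReal.add_right_inj (hSSfin2 CB)).mp
          ((ENNReal.add_right_inj (hSSfin2 CA)).mp h)
      -- total preorder putting CA ∪ CB at the bottom, with an extra bottom point
      set BO : Set A := CA ∪ CB with hBOdef
      set r' : A → A → Prop := fun x y => x ∈ BO ∨ (y ∉ BO ∧ x ≤ y) with hr'def
      have hr'refl : ∀ x, r' x x := by
        intro x
        by_cases hx : x ∈ BO
        · exact Or.inl hx
        · exact Or.inr ⟨hx, le_refl x⟩
      have hr'trans : ∀ {x y z : A}, r' x y → r' y z → r' x z := by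
        rintro x y z (h | ⟨hy, hxy⟩) h2
        · exact Or.inl h
        · rcases h2 with h2 | ⟨hz, hyz⟩
          · exact absurd h2 hy
          · exact Or.inr ⟨hz, le_trans hxy hyz⟩
      have hCCtot : ∀ x y, x ∈ CC → y ∈ CC → x ≤ y ∨ y ≤ x := by
        intro x y hx hy
        by_contra h
        push_neg at h
        rcases pairUniv x y h.1 h.2 a₀ with h3 | h3
        · exact hba (le_trans hx.2 h3)
        · exact hba (le_trans hy.2 h3)
      have hnotBO : ∀ x, x ∉ BO → x ∈ CC := by
        intro x hx
        rcases hcover x with h | h | h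
        · exact absurd (Or.inl h) hx
        · exact absurd (Or.inr h) hx
        · exact h
      have hr'tot : ∀ x y, r' x y ∨ r' y x := by
        intro x y
        by_cases hx : x ∈ BO
        · exact Or.inl (Or.inl hx)
        by_cases hy : y ∈ BO
        · exact Or.inr (Or.inl hy)
        rcases hCCtot x y (hnotBO x hx) (hnotBO y hy) with h | h
        · exact Or.inl (Or.inr ⟨hy, h⟩)
        · exact Or.inr (Or.inr ⟨hx, h⟩)
      set rO : Option A → Option A → Prop := fun o₁ o₂ =>
        o₁ = none ∨ ∃ x y, o₁ = some x ∧ o₂ = some y ∧ r' x y with hrOdef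
      have hrOrefl : ∀ o, rO o o := by
        rintro (_ | x)
        · exact Or.inl rfl
        · exact Or.inr ⟨x, x, rfl, rfl, hr'refl x⟩
      have hrOtrans : ∀ {o₁ o₂ o₃ : Option A}, rO o₁ o₂ → rO o₂ o₃ → rO o₁ o₃ := by
        rintro o₁ o₂ o₃ (h | ⟨x, y, rfl, rfl, hxy⟩) h2
        · exact Or.inl h
        · rcases h2 with h2 | ⟨y', z, hy', rfl, hyz⟩
          · exact absurd h2 (by simp)
          · rw [Option.some_inj] at hy'
            subst hy'
            exact Or.inr ⟨x, z, rfl, rfl, hr'trans hxy hyz⟩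
      have hrOtot : ∀ o₁ o₂, rO o₁ o₂ ∨ rO o₂ o₁ := by
        rintro (_ | x) o₂
        · exact Or.inl (Or.inl rfl)
        rcases o₂ with _ | y
        · exact Or.inr (Or.inl rfl)
        rcases hr'tot x y with h | h
        · exact Or.inl (Or.inr ⟨x, y, rfl, rfl, h⟩)
        · exact Or.inr (Or.inr ⟨y, x, rfl, rfl, h⟩)
      set μt1 : Option A → ℝ≥0∞ := fun o => o.elim d (CC.indicator μ₁) with hμt1def
      set μt2 : Option A → ℝ≥0∞ := fun o => o.elim 0 (CC.indicator μ₂) with hμt2def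
      have hCCind1 : ∑' x, CC.indicator μ₁ x = setSum μ₁ CC := (setSum_def μ₁ CC).symm
      have hCCind2 : ∑' x, CC.indicator μ₂ x = setSum μ₂ CC := (setSum_def μ₂ CC).symm
      have hμt1sum : ∑' o, μt1 o = setSum μ₂ CC := by
        rw [tsum_option' μt1]
        show d + ∑' x, CC.indicator μ₁ x = setSum μ₂ CC
        rw [hCCind1, hd_eq]
      have hμt2sum : ∑' o, μt2 o = setSum μ₂ CC := by
        rw [tsum_option' μt2]
        show (0 : ℝ≥0∞) + ∑' x, CC.indicator μ₂ x = setSum μ₂ CC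
        rw [hCCind2, zero_add]
      have hμt1fin : ∑' o, μt1 o ≠ ∞ := by rw [hμt1sum]; exact hSSfin2 CC
      have hμtw : ∑' o, μt1 o = ∑' o, μt2 o := by rw [hμt1sum, hμt2sum]
      have hdomO : ∀ V : Set (Option A), (∀ ⦃o₁ o₂⦄, o₁ ∈ V → rO o₁ o₂ → o₂ ∈ V) →
          setSum μt1 V ≤ setSum μt2 V := by
        intro V hup
        by_cases hnone : (none : Option A) ∈ V
        · have hVuniv : V = Set.univ := Set.eq_univ_of_forall fun o => hup hnone (Or.inl rfl)
          rw [hVuniv, setSum_univ, setSum_univ, hμt1sum, hμt2sum]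
        · rw [setSum_option μt1 hnone, setSum_option μt2 hnone]
          have he1 : setSum (fun x => μt1 (some x)) {x | some x ∈ V}
              = setSum μ₁ ({x | some x ∈ V} ∩ CC) := by
            rw [setSum_congr' {x | some x ∈ V}
              (fun x => show μt1 (some x) = CC.indicator μ₁ x from rfl)]
            exact setSum_indicator μ₁ CC {x | some x ∈ V}
          have he2 : setSum (fun x => μt2 (some x)) {x | some x ∈ V}
              = setSum μ₂ ({x | some x ∈ V} ∩ CC) := by
            rw [setSum_congr' {x | some x ∈ V}
              (fun x => show μt2 (some x) = CC.indicator μ₂ x from rfl)]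
            exact setSum_indicator μ₂ CC {x | some x ∈ V}
          rw [he1, he2]
          set Vt : Set A := {x | some x ∈ V} with hVtdef
          have hVup' : ∀ ⦃x y : A⦄, x ∈ Vt → r' x y → y ∈ Vt := fun x y hx hxy =>
            hup hx (Or.inr ⟨x, y, rfl, rfl, hxy⟩)
          by_cases hBO : ∃ v ∈ Vt, v ∈ BO
          · obtain ⟨v, hv, hvBO⟩ := hBO
            have hVt : Vt = Set.univ := Set.eq_univ_of_forall fun z => hVup' hv (Or.inl hvBO)
            rw [hVt, Set.univ_inter]
            exact hM12
          · push_neg at hBO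
            have hVC : Vt ⊆ CC := fun x hx => hnotBO x (hBO x hx)
            rw [Set.inter_eq_self_of_subset_left hVC]
            have hVup2 : ∀ a b : A, a ∈ Vt → a ≤ b → b ∈ Vt := by
              intro a b ha hab2
              have haC : a ∈ CC := hVC ha
              have hbC : b ∈ CC := ⟨le_trans haC.1 hab2, le_trans haC.2 hab2⟩
              have hbBO : b ∉ BO := by
                rintro (h | h)
                · exact h.2 hbC.2
                · exact h.2 hbC.1
              exact hVup' ha (Or.inr ⟨hbBO, hab2⟩)
            by_cases hne : Vt.Nonempty
            · rcases hmin Vt hne hVup2 with ⟨m, hm, hmle⟩ | huniv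
              · have hVeq : Vt = {a | m ≤ a} :=
                  Set.eq_of_subset_of_subset (fun z hz => hmle z hz)
                    (fun z hz => hVup2 m z hm hz)
                rw [hVeq]
                exact hdom m
              · exfalso
                have ha0 : a₀ ∈ Vt := huniv ▸ Set.mem_univ a₀
                exact hba (hVC ha0).2
            · rw [Set.not_nonempty_iff_eq_empty.mp hne, setSum_empty, setSum_empty]
      obtain ⟨κ, hκ1, hκ2, hκsupp⟩ := chainCoupling rO hrOrefl
        (fun h h' => hrOtrans h h') hrOtot μt1 μt2 hμt1fin hμtw hdomO
      set σ : A → ℝ≥0∞ := fun y => κ (none, some y) with hσdef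
      have hκnone2 : ∀ o, κ (o, none) = 0 := by
        intro o
        have h0 : ∑' o, κ (o, none) = 0 := by
          rw [hκ2 none]
          rfl
        exact ENNReal.tsum_eq_zero.mp h0 o
      have hσsum : ∑' y, σ y = d := by
        have h := hκ1 none
        rw [tsum_option' (fun o => κ (none, o)), hκnone2 none, zero_add] at h
        exact h
      have hκCm1 : ∀ x, ∑' y, κ (some x, some y) = CC.indicator μ₁ x := by
        intro x
        have h := hκ1 (some x)
        rw [tsum_option' (fun o => κ (some x, o)), hκnone2 (some x), zero_add] at h
        exact h
      have hκCm2 : ∀ y, σ y + ∑' x, κ (some x, some y) = CC.indicator μ₂ y := by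
        intro y
        have h := hκ2 (some y)
        rw [tsum_option' (fun o => κ (o, some y))] at h
        exact h
      have hσzero : ∀ y, y ∉ CC → σ y = 0 := by
        intro y hy
        have h := hκCm2 y
        rw [Set.indicator_of_notMem hy] at h
        exact (add_eq_zero.mp h).1
      have hrAd : rA ≤ d := le_self_add
      have hrBd : rB ≤ d := le_add_self
      set cA : ℝ≥0∞ := rA / d with hcAdef
      set cB : ℝ≥0∞ := rB / d with hcBdef
      have hdcA : d * cA = rA := by
        by_cases hd0 : d = 0
        · have h0 : rA = 0 := le_antisymm (hd0 ▸ hrAd) zero_le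
          rw [hd0, h0, zero_mul]
        · exact ENNReal.mul_div_cancel hd0 hdfin
      have hdcB : d * cB = rB := by
        by_cases hd0 : d = 0
        · have h0 : rB = 0 := le_antisymm (hd0 ▸ hrBd) zero_le
          rw [hd0, h0, zero_mul]
        · exact ENNReal.mul_div_cancel hd0 hdfin
      set η1A : A → ℝ≥0∞ := CA.indicator μ₁ with hη1Adef
      set η1B : A → ℝ≥0∞ := CB.indicator μ₁ with hη1Bdef
      set η2A : A → ℝ≥0∞ :=
        fun y => CA.indicator μ₂ y + CC.indicator (fun z => σ z * cA) y with hη2Adef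
      set η2B : A → ℝ≥0∞ :=
        fun y => CB.indicator μ₂ y + CC.indicator (fun z => σ z * cB) y with hη2Bdef
      have hη1Asum : ∑' x, η1A x = setSum μ₁ CA := (setSum_def μ₁ CA).symm
      have hη1Bsum : ∑' x, η1B x = setSum μ₁ CB := (setSum_def μ₁ CB).symm
      have hσcA : ∑' y, CC.indicator (fun z => σ z * cA) y = rA := by
        have h : ∀ y, CC.indicator (fun z => σ z * cA) y = σ y * cA := by
          intro y
          by_cases hy : y ∈ CC
          · rw [Set.indicator_of_mem hy]
          · rw [Set.indicator_of_notMem hy, hσzero y hy, zero_mul]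
        rw [tsum_congr h, ENNReal.tsum_mul_right, hσsum, mul_comm, ← hdcA, mul_comm]
      have hσcB : ∑' y, CC.indicator (fun z => σ z * cB) y = rB := by
        have h : ∀ y, CC.indicator (fun z => σ z * cB) y = σ y * cB := by
          intro y
          by_cases hy : y ∈ CC
          · rw [Set.indicator_of_mem hy]
          · rw [Set.indicator_of_notMem hy, hσzero y hy, zero_mul]
        rw [tsum_congr h, ENNReal.tsum_mul_right, hσsum, mul_comm, ← hdcB, mul_comm]
      have hη2Asum : ∑' y, η2A y = setSum μ₁ CA := by
        rw [hη2Adef, ENNReal.tsum_add]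
        rw [show ∑' y, CA.indicator μ₂ y = setSum μ₂ CA from (setSum_def μ₂ CA).symm, hσcA]
        exact h1A
      have hη2Bsum : ∑' y, η2B y = setSum μ₁ CB := by
        rw [hη2Bdef, ENNReal.tsum_add]
        rw [show ∑' y, CB.indicator μ₂ y = setSum μ₂ CB from (setSum_def μ₂ CB).symm, hσcB]
        exact h1B
      obtain ⟨hκA1, hκA2⟩ := prodCoupling η1A η2A hη1Asum hη2Asum (hSSfin1 CA)
      obtain ⟨hκB1, hκB2⟩ := prodCoupling η1B η2B hη1Bsum hη2Bsum (hSSfin1 CB)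
      have hpart : ∀ (ν : A → ℝ≥0∞) (x : A),
          CA.indicator ν x + CB.indicator ν x + CC.indicator ν x = ν x := by
        intro ν x
        rcases hcover x with h | h | h
        · rw [Set.indicator_of_mem h, Set.indicator_of_notMem (Set.disjoint_left.mp hdAB h),
            Set.indicator_of_notMem (Set.disjoint_left.mp hdAC h), add_zero, add_zero]
        · rw [Set.indicator_of_notMem (Set.disjoint_right.mp hdAB h), Set.indicator_of_mem h,
            Set.indicator_of_notMem (Set.disjoint_left.mp hdBC h), zero_add, add_zero]
        · rw [Set.indicator_of_notMem (Set.disjoint_right.mp hdAC h),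
            Set.indicator_of_notMem (Set.disjoint_right.mp hdBC h), Set.indicator_of_mem h,
            zero_add, zero_add]
      refine ⟨fun p => η1A p.1 * η2A p.2 * (setSum μ₁ CA)⁻¹
        + η1B p.1 * η2B p.2 * (setSum μ₁ CB)⁻¹ + κ (some p.1, some p.2), ?_, ?_, ?_⟩
      · intro x
        show (∑' y, (η1A x * η2A y * (setSum μ₁ CA)⁻¹
          + η1B x * η2B y * (setSum μ₁ CB)⁻¹ + κ (some x, some y))) = μ₁ x
        rw [ENNReal.tsum_add, ENNReal.tsum_add, hκA1 x, hκB1 x, hκCm1 x]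
        exact hpart μ₁ x
      · intro y
        show (∑' x, (η1A x * η2A y * (setSum μ₁ CA)⁻¹
          + η1B x * η2B y * (setSum μ₁ CB)⁻¹ + κ (some x, some y))) = μ₂ y
        rw [ENNReal.tsum_add, ENNReal.tsum_add, hκA2 y, hκB2 y]
        have hy2 := hκCm2 y
        rcases hcover y with h | h | h
        · have hyC : y ∉ CC := Set.disjoint_left.mp hdAC h
          have hyB : y ∉ CB := Set.disjoint_left.mp hdAB h
          rw [Set.indicator_of_notMem hyC] at hy2
          have ht0 : ∑' x, κ (some x, some y) = 0 := (add_eq_zero.mp hy2).2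
          rw [ht0, add_zero, hη2Adef, hη2Bdef]
          show CA.indicator μ₂ y + CC.indicator (fun z => σ z * cA) y
            + (CB.indicator μ₂ y + CC.indicator (fun z => σ z * cB) y) = μ₂ y
          rw [Set.indicator_of_mem h, Set.indicator_of_notMem hyC,
            Set.indicator_of_notMem hyB, Set.indicator_of_notMem hyC]
          simp
        · have hyC : y ∉ CC := Set.disjoint_left.mp hdBC h
          have hyA : y ∉ CA := Set.disjoint_right.mp hdAB h
          rw [Set.indicator_of_notMem hyC] at hy2
          have ht0 : ∑' x, κ (some x, some y) = 0 := (add_eq_zero.mp hy2).2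
          rw [ht0, add_zero, hη2Adef, hη2Bdef]
          show CA.indicator μ₂ y + CC.indicator (fun z => σ z * cA) y
            + (CB.indicator μ₂ y + CC.indicator (fun z => σ z * cB) y) = μ₂ y
          rw [Set.indicator_of_mem h, Set.indicator_of_notMem hyC,
            Set.indicator_of_notMem hyA, Set.indicator_of_notMem hyC]
          simp
        · have hyA : y ∉ CA := Set.disjoint_right.mp hdAC h
          have hyB : y ∉ CB := Set.disjoint_right.mp hdBC h
          rw [Set.indicator_of_mem h] at hy2
          rw [hη2Adef, hη2Bdef]
          show CA.indicator μ₂ y + CC.indicator (fun z => σ z * cA) y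
            + (CB.indicator μ₂ y + CC.indicator (fun z => σ z * cB) y)
            + ∑' x, κ (some x, some y) = μ₂ y
          rw [Set.indicator_of_notMem hyA, Set.indicator_of_notMem hyB,
            Set.indicator_of_mem h, Set.indicator_of_mem h, zero_add, zero_add]
          have hσy : σ y * cA + σ y * cB = σ y := by
            by_cases hd0 : d = 0
            · have hσ0 : σ y = 0 := by
                have hle := ENNReal.le_tsum (f := σ) y
                rw [hσsum, hd0] at hle
                exact le_antisymm hle zero_le
              rw [hσ0, zero_mul, zero_mul, add_zero]
            · rw [← mul_add]
              have hc1 : cA + cB = 1 := by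
                rw [hcAdef, hcBdef, ENNReal.div_add_div_same, ← hddef,
                  ENNReal.div_self hd0 hdfin]
              rw [hc1, mul_one]
          calc σ y * cA + σ y * cB + ∑' x, κ (some x, some y)
              = σ y + ∑' x, κ (some x, some y) := by rw [hσy]
            _ = μ₂ y := hy2
      · intro x y hne
        by_contra hxy
        apply hne
        show η1A x * η2A y * (setSum μ₁ CA)⁻¹
          + η1B x * η2B y * (setSum μ₁ CB)⁻¹ + κ (some x, some y) = 0
        have hA0 : η1A x * η2A y * (setSum μ₁ CA)⁻¹ = 0 := by
          by_cases hxA : x ∈ CA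
          · have hxlea : x ≤ a₀ := S2a x hxA.1 hxA.2
            have hyA : y ∉ CA := fun hy => hxy (le_trans hxlea hy.1)
            have hyC : y ∉ CC := fun hy => hxy (le_trans hxlea hy.1)
            have hz : η2A y = 0 := by
              rw [hη2Adef]
              show CA.indicator μ₂ y + CC.indicator (fun z => σ z * cA) y = 0
              rw [Set.indicator_of_notMem hyA, Set.indicator_of_notMem hyC, add_zero]
            rw [hz, mul_zero, zero_mul]
          · have hz : η1A x = 0 := by
              rw [hη1Adef]
              exact Set.indicator_of_notMem hxA μ₁
            rw [hz, zero_mul, zero_mul]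
        have hB0 : η1B x * η2B y * (setSum μ₁ CB)⁻¹ = 0 := by
          by_cases hxB : x ∈ CB
          · have hxleb : x ≤ b₀ := S2b x hxB.1 hxB.2
            have hyB : y ∉ CB := fun hy => hxy (le_trans hxleb hy.1)
            have hyC : y ∉ CC := fun hy => hxy (le_trans hxleb hy.2)
            have hz : η2B y = 0 := by
              rw [hη2Bdef]
              show CB.indicator μ₂ y + CC.indicator (fun z => σ z * cB) y = 0
              rw [Set.indicator_of_notMem hyB, Set.indicator_of_notMem hyC, add_zero]
            rw [hz, mul_zero, zero_mul]
          · have hz : η1B x = 0 := by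
              rw [hη1Bdef]
              exact Set.indicator_of_notMem hxB μ₁
            rw [hz, zero_mul, zero_mul]
        have hC0 : κ (some x, some y) = 0 := by
          by_contra hκ0
          have hxCC : x ∈ CC := by
            by_contra hxC
            have h := hκCm1 x
            rw [Set.indicator_of_notMem hxC] at h
            exact hκ0 (ENNReal.tsum_eq_zero.mp h y)
          have hrxy := hκsupp _ _ hκ0
          rcases hrxy with h | ⟨x', y', hx', hy', hr⟩
          · exact absurd h (by simp)
          · rw [Option.some_inj] at hx' hy'
            subst hx'
            subst hy'
            rcases hr with hBOx | ⟨_, hle⟩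
            · rcases hBOx with h | h
              · exact h.2 hxCC.2
              · exact h.2 hxCC.1
            · exact hxy hle
        rw [hA0, hB0, hC0, add_zero, add_zero]
  · rintro ⟨μ, hm1, hm2, hsupp⟩ k
    set f : A → A → ℝ≥0∞ := fun a b => if k ≤ a then μ (a, b) else 0 with hf
    set g : A → A → ℝ≥0∞ := fun a b => if k ≤ b then μ (a, b) else 0 with hg
    have h1 : ∀ a, ({a' | k ≤ a'} : Set A).indicator μ₁ a = ∑' b, f a b := by
      intro a
      by_cases ha : k ≤ a
      · rw [Set.indicator_of_mem (show a ∈ {a' | k ≤ a'} from ha), ← hm1 a]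
        exact tsum_congr fun b => by rw [hf]; simp [ha]
      · rw [Set.indicator_of_notMem (show a ∉ {a' | k ≤ a'} from ha)]
        rw [show (∑' b, f a b) = ∑' b, (0:ℝ≥0∞) from tsum_congr fun b => by
          rw [hf]; simp [ha]]
        simp
    have h2 : ∀ b, ({a' | k ≤ a'} : Set A).indicator μ₂ b = ∑' a, g a b := by
      intro b
      by_cases hb : k ≤ b
      · rw [Set.indicator_of_mem (show b ∈ {a' | k ≤ a'} from hb), ← hm2 b]
        exact tsum_congr fun a => by rw [hg]; simp [hb]
      · rw [Set.indicator_of_notMem (show b ∉ {a' | k ≤ a'} from hb)]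
        rw [show (∑' a, g a b) = ∑' a, (0:ℝ≥0∞) from tsum_congr fun a => by
          rw [hg]; simp [hb]]
        simp
    have hle : ∀ a b, f a b ≤ g a b := by
      intro a b
      rw [hf, hg]
      by_cases ha : k ≤ a
      · by_cases hz : μ (a, b) = 0
        · simp [ha, hz]
        · have hab : a ≤ b := hsupp a b hz
          simp [ha, le_trans ha hab]
      · simp [ha]
    calc setSum μ₁ {a | k ≤ a} = ∑' a, ({a' | k ≤ a'} : Set A).indicator μ₁ a :=
          setSum_def _ _
      _ = ∑' a, ∑' b, f a b := tsum_congr h1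
      _ ≤ ∑' a, ∑' b, g a b :=
          ENNReal.tsum_le_tsum fun a => ENNReal.tsum_le_tsum fun b => hle a b
      _ = ∑' b, ∑' a, g a b := ENNReal.tsum_comm
      _ = ∑' b, ({a' | k ≤ a'} : Set A).indicator μ₂ b := tsum_congr fun b => (h2 b).symm
      _ = setSum μ₂ {a | k ≤ a} := (setSum_def _ _).symm

theorem stochastic_domination_iff {A : Type*} [Countable A] [Preorder A]
    (hmin : ∀ S : Set A, S.Nonempty → (∀ a b, a ∈ S → a ≤ b → b ∈ S) →
      (∃ m ∈ S, ∀ a ∈ S, m ≤ a) ∨ S = Set.univ)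
    (μ₁ μ₂ : A → ℝ≥0∞) (h₁ : IsSubDist μ₁) (h₂ : IsSubDist μ₂)
    (hw : ∑' a, μ₁ a = ∑' a, μ₂ a) :
    (∀ k : A, setSum μ₁ {a | k ≤ a} ≤ setSum μ₂ {a | k ≤ a}) ↔
      ∃ μ : A × A → ℝ≥0∞, IsCoupling μ μ₁ μ₂ ∧
        {p | μ p ≠ 0} ⊆ {p : A × A | p.1 ≤ p.2} := by 
  rw [stochastic_domination_iff' hmin μ₁ μ₂ h₁ h₂ hw]
  constructor
  · rintro ⟨μ, hm1, hm2, hsupp⟩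
    refine ⟨μ, ⟨?_, hm1, hm2⟩, ?_⟩
    · show ∑' p, μ p ≤ 1
      rw [ENNReal.tsum_prod']
      calc ∑' x, ∑' y, μ (x, y) = ∑' x, μ₁ x := tsum_congr hm1
        _ ≤ 1 := h₁
    · rintro ⟨x, y⟩ hp
      exact hsupp x y hp
  · rintro ⟨μ, ⟨hsub, hm1, hm2⟩, hsupp⟩
    refine ⟨μ, hm1, hm2, ?_⟩
    intro x y hne
    exact hsupp hne
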